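/- For every n ≥ 0, the elementary symmetric function e_n[X] equals the sum over all compositions α of n of the functions C_α[X;q] := C_{α_1} C_{α_2} ··· C_{α_ℓ}(1). -/

import Mathlib

open Finset MvPolynomial

noncomputable section

/-- Base field `F = ℚ(q)`. -/
abbrev F : Type := RatFunc ℚ

/-- The parameter `q`. -/
noncomputable def q : F := RatFunc.X

/-- The ring of symmetric functions `Λ = F[p₁, p₂, p₃, …]`, where the variable
`X k` represents the power sum `p_{k+1}`. -/
abbrev SymF : Type := MvPolynomial ℕ F

/-- `pp k` is the power sum `p_k` for `k ≥ 1`. -/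
noncomputable def pp (k : ℕ) : SymF := MvPolynomial.X (k - 1)

/-- Complete homogeneous symmetric functions, via Newton's identity
`(n+1) h_{n+1} = ∑_{k=1}^{n+1} p_k h_{n+1-k}`. -/
noncomputable def hN : ℕ → SymF
  | 0 => 1
  | n + 1 => ((n : F) + 1)⁻¹ • ∑ k ∈ Finset.range (n + 1), pp (k + 1) * hN (n - k)
  termination_by n => n
  decreasing_by omega

/-- Elementary symmetric functions, via Newton's identity
`(n+1) e_{n+1} = ∑_{k=1}^{n+1} (-1)^{k-1} p_k e_{n+1-k}`. -/
noncomputable def eN : ℕ → SymF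
  | 0 => 1
  | n + 1 => ((n : F) + 1)⁻¹ • ∑ k ∈ Finset.range (n + 1), ((-1 : F) ^ k) • (pp (k + 1) * eN (n - k))
  termination_by n => n
  decreasing_by omega

/-- `hh m = h_m` for `m ≥ 0` and `0` for `m < 0`. -/
noncomputable def hh (m : ℤ) : SymF := if 0 ≤ m then hN m.toNat else 0

/-- `ee m = e_m` for `m ≥ 0` and `0` for `m < 0`. -/
noncomputable def ee (m : ℤ) : SymF := if 0 ≤ m then eN m.toNat else 0

/-- The plethystic translation `f[X] ↦ f[X + (1-q)z]`, determined by
`p_k ↦ p_k + (1-q^k) z^k`.  The coefficient of `z^r` computes `h_r[X(1-q)]^⊥ f`. -/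
noncomputable def Tq : SymF →ₐ[F] Polynomial SymF :=
  MvPolynomial.aeval fun k =>
    Polynomial.C (MvPolynomial.X k) +
      Polynomial.C (MvPolynomial.C (1 - q ^ (k + 1))) * Polynomial.X ^ (k + 1)

/-- The operator `h_r[X(1-q)]^⊥`. -/
noncomputable def Dq (r : ℕ) (P : SymF) : SymF := (Tq P).coeff r

/-- The plethystic translation `f[X] ↦ f[X - z]`, determined by `p_k ↦ p_k - z^k`;
one has `f[X - z] = ∑_k (-z)^k (e_k^⊥ f)[X]`. -/
noncomputable def T1 : SymF →ₐ[F] Polynomial SymF :=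
  MvPolynomial.aeval fun k =>
    Polynomial.C (MvPolynomial.X k) - Polynomial.X ^ (k + 1)

/-- The operator `e_r^⊥`. -/
noncomputable def eperp (r : ℕ) (P : SymF) : SymF := ((-1 : F) ^ r) • (T1 P).coeff r

/-- The Hall–Littlewood creation operator
`ℂ_m P = (-1/q)^{m-1} ∑_{r ≥ 0} q^{-r} h_{m+r} · (h_r[X(1-q)])^⊥ P`
(the sum is finite: terms with `r > deg_z (Tq P)` vanish). -/
noncomputable def Cop (m : ℤ) (P : SymF) : SymF :=
  ((-q⁻¹ : F) ^ (m - 1)) •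
    ∑ r ∈ Finset.range ((Tq P).natDegree + 1), ((q⁻¹ : F) ^ r) • (hh (m + r) * Dq r P)

/-- The creation operator `𝔹_m P = ∑_{r ≥ 0} (-1)^r e_{m+r} · (h_r[X(1-q)])^⊥ P`. -/
noncomputable def Bop (m : ℤ) (P : SymF) : SymF :=
  ∑ r ∈ Finset.range ((Tq P).natDegree + 1), ((-1 : F) ^ r) • (ee (m + r) * Dq r P)

/-- The Bernstein (Schur) creation operator `S_m P = ∑_{r ≥ 0} (-1)^r h_{m+r} · e_r^⊥ P`. -/
noncomputable def Sop (m : ℤ) (P : SymF) : SymF :=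
  ∑ r ∈ Finset.range ((T1 P).natDegree + 1), ((-1 : F) ^ r) • (hh (m + r) * eperp r P)

/-- `C_α[X;q] = ℂ_{α₁} ℂ_{α₂} ⋯ ℂ_{α_ℓ}(1)`. -/
noncomputable def Cfun : List ℕ → SymF
  | [] => 1
  | a :: l => Cop a (Cfun l)

/-- `B_α[X;q] = 𝔹_{α_ℓ} 𝔹_{α_{ℓ-1}} ⋯ 𝔹_{α₁}(1)`. -/
noncomputable def Bfun (l : List ℕ) : SymF := l.foldl (fun acc a => Bop a acc) 1

end

/-- The touch set `{0} ∪ Des(c)` of a composition `c` of `n`: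
the set of partial sums `c₁ + ⋯ + c_i` for `0 ≤ i < ℓ(c)` (0-based touch rows). -/
def touchSet {n : ℕ} (c : Composition n) : Finset ℕ :=
  (Finset.range c.length).image fun i => c.sizeUpTo i

/-- The descent set of a composition: its proper nonzero partial sums. -/
def DesSet {n : ℕ} (c : Composition n) : Finset ℕ := (touchSet c).erase 0

/-- `Refines β α` means `β ≤ α`: `β` is finer than `α`, i.e. `Des(α) ⊆ Des(β)`. -/
abbrev Refines {n : ℕ} (β α : Composition n) : Prop := touchSet α ⊆ touchSet β

/-- `doffC α β = doff_α(DP(β))` for `β ≤ α`: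
`∑_{k=1}^{ℓ(α)} (ℓ(α)-k) r_k` where `r_k` is the number of parts of `β`
lying inside the `k`-th part of `α`. -/
def doffC {n : ℕ} (α β : Composition n) : ℕ :=
  ∑ k ∈ Finset.range α.length,
    (α.length - 1 - k) *
      ((touchSet β).filter fun s => α.sizeUpTo k ≤ s ∧ s < α.sizeUpTo (k + 1)).card

/-- The reversed composition. -/
def revC {n : ℕ} (c : Composition n) : Composition n :=
  ⟨c.blocks.reverse, fun hi => c.blocks_pos (List.mem_reverse.mp hi), by
    rw [List.sum_reverse]; exact c.blocks_sum⟩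

/-- A Dyck path from `(0,0)` to `(n,n)`, encoded by its arm sequence:
`arm i` is the number of cells between the path and the diagonal in row `i+1`
(rows are 0-indexed here). -/
structure DyckPath (n : ℕ) where
  arm : ℕ → ℕ
  arm_zero : 0 < n → arm 0 = 0
  arm_step : ∀ i, i + 1 < n → arm (i + 1) ≤ arm i + 1
  arm_outside : ∀ i, n ≤ i → arm i = 0

/-- `area(D) = ∑ᵢ aᵢ`. -/
def area {n : ℕ} (D : DyckPath n) : ℕ := ∑ i ∈ Finset.range n, D.arm i

/-- `dinv(D) = #{(i,j) : i < j, aᵢ - aⱼ ∈ {0,1}}`. -/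
def dinv {n : ℕ} (D : DyckPath n) : ℕ :=
  ((Finset.range n ×ˢ Finset.range n).filter fun p =>
      p.1 < p.2 ∧ (D.arm p.1 = D.arm p.2 ∨ D.arm p.1 = D.arm p.2 + 1)).card

/-- `IsTouch D α` says that `touch(D) = α`: the rows where the arm vanishes are
exactly the partial sums of `α`. -/
def IsTouch {n : ℕ} (D : DyckPath n) (α : Composition n) : Prop :=
  ∀ i < n, (D.arm i = 0 ↔ i ∈ touchSet α)

/-- `doff_α(D)`, for a path `D` whose touch composition refines `α`. -/
def doffD {n : ℕ} (α : Composition n) (D : DyckPath n) : ℕ :=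
  ∑ k ∈ Finset.range α.length,
    (α.length - 1 - k) *
      ((Finset.Ico (α.sizeUpTo k) (α.sizeUpTo (k + 1))).filter fun i => D.arm i = 0).card

instance {n : ℕ} : DecidableEq (Composition n) := fun a b =>
  decidable_of_iff (a.blocks = b.blocks) ⟨fun h => by cases a; cases b; simpa using h,
    fun h => by rw [h]⟩

noncomputable section

/-- Plethystic evaluation at the alphabet `1 - q`: the algebra map `p_k ↦ 1 - q^k`. -/
noncomputable def evOneMinusQ : SymF →ₐ[F] F := MvPolynomial.aeval fun k => 1 - q ^ (k + 1)

/-- The cells of the Young diagram of a partition given as a (weakly decreasing)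
list of parts: `(i, j)` with `j < lᵢ` (row `i`, column `j`, both 0-based). -/
def pcells (l : List ℕ) : Finset (ℕ × ℕ) :=
  (Finset.range l.length ×ˢ Finset.range (l.foldr max 0)).filter fun c => c.2 < l.getD c.1 0

/-- The arm of a cell: number of cells strictly to its right in its row. -/
def armC (l : List ℕ) (c : ℕ × ℕ) : ℕ := l.getD c.1 0 - c.2 - 1

/-- The leg of a cell: number of cells of the diagram in its column in later rows. -/
def legC (l : List ℕ) (c : ℕ × ℕ) : ℕ :=
  ((Finset.Ico (c.1 + 1) l.length).filter fun i => c.2 < l.getD i 0).card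

/-- The `k`-th part (`k ≥ 1`) of the conjugate partition: `μ'_k = #{i : μᵢ ≥ k}`. -/
def conjPart (l : List ℕ) (k : ℕ) : ℕ := l.countP fun x => k ≤ x

/-- The multiplicity `m_i(μ')` of `i` among the parts of the conjugate partition. -/
def mConj (l : List ℕ) (i : ℕ) : ℕ :=
  ((Finset.Icc 1 l.headI).filter fun k => conjPart l k = i).card

/-- `n(μ') = ∑ (k-1) μ'_k`. -/
def nConj (l : List ℕ) : ℕ := ∑ k ∈ Finset.Icc 1 l.headI, (k - 1) * conjPart l k

/-- The `q`-Pochhammer symbol `(q;q)_k = ∏_{j=1}^k (1 - q^j)` as an element of `F`. -/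
noncomputable def qpoch (k : ℕ) : F := ∏ j ∈ Finset.Icc 1 k, (1 - q ^ j)

end

open Finset Polynomial

instance : CharZero F := charZero_of_injective_algebraMap (algebraMap ℚ F).injective

lemma q_ne : (q : F) ≠ 0 := RatFunc.X_ne_zero

/-- `e_k[1-q]`. -/
noncomputable def eqF : ℕ → F
  | 0 => 1
  | k + 1 => (1 - q) * (-q) ^ k

lemma neg_one_pow_two_mul (s : ℕ) : ((-1:F)) ^ (2*s) = 1 := by
  rw [pow_mul, neg_one_sq, one_pow]

lemma neg_one_sq' (m : ℕ) : ((-1:F))^m * ((-1:F))^m = 1 := by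
  rw [← pow_add, show m + m = 2*m by ring, neg_one_pow_two_mul]

lemma P4' (s : ℕ) : ∑ r ∈ Finset.range (s+1), (-1:F)^r * eqF r = q ^ s := by
  induction s with
  | zero => simp [eqF]
  | succ s ih =>
      rw [Finset.sum_range_succ, ih]
      show q ^ s + (-1:F)^(s+1) * ((1-q) * (-q)^s) = q^(s+1)
      have h : (-1:F)^(s+1) * (-q)^s = -(q^s) := by
        rw [neg_pow q s, ← mul_assoc, ← pow_add,
          show s+1+s = 2*s+1 by ring, pow_succ, neg_one_pow_two_mul, one_mul]
        ring
      calc q ^ s + (-1:F)^(s+1) * ((1-q) * (-q)^s)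
          = q ^ s + (1-q) * ((-1:F)^(s+1) * (-q)^s) := by ring
        _ = q^(s+1) := by rw [h]; ring

lemma neg_one_pow_sub {r s : ℕ} (h : r ≤ s) : ((-1:F)) ^ (s - r) = (-1)^s * (-1)^r := by
  have h1 : ((-1:F))^(s-r) * ((-1:F))^r = (-1:F)^s := by rw [← pow_add, Nat.sub_add_cancel h]
  calc ((-1:F))^(s-r) = ((-1:F))^(s-r) * (((-1:F))^r * ((-1:F))^r) := by rw [neg_one_sq', mul_one]
    _ = (-1)^s * (-1)^r := by rw [← mul_assoc, h1]

lemma P4'' (m : ℕ) : ∑ k ∈ Finset.range (m+1), (-1:F)^k * eqF (m-k) = (-1:F)^m * q^m := by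
  have step : ∀ k ∈ Finset.range (m+1), (-1:F)^k * eqF (m-k)
      = (-1:F)^m * ((fun j => (-1:F)^j * eqF j) (m+1-1-k)) := by
    intro k hk
    simp only [Finset.mem_range] at hk
    have hk' : k ≤ m := by omega
    show _ = (-1:F)^m * ((-1:F)^(m+1-1-k) * eqF (m+1-1-k))
    rw [show m+1-1-k = m-k by omega, neg_one_pow_sub hk', ← mul_assoc, ← mul_assoc,
      neg_one_sq', one_mul]
  rw [Finset.sum_congr rfl step, ← Finset.mul_sum,
    Finset.sum_range_reflect (fun j => (-1:F)^j * eqF j) (m+1), P4']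

lemma P4 (r : ℕ) : ∑ k ∈ Finset.range r, (-1:F)^k * (1 - q^(k+1)) * eqF (r-1-k) = (r:F) * eqF r := by
  rcases Nat.eq_zero_or_pos r with h0 | h1
  · subst h0; simp
  · obtain ⟨m, rfl⟩ : ∃ m, r = m + 1 := ⟨r - 1, by omega⟩
    have split : ∀ k ∈ Finset.range (m+1), (-1:F)^k * (1 - q^(k+1)) * eqF (m+1-1-k)
        = (-1:F)^k * eqF (m-k) - (-1:F)^k * q^(k+1) * eqF (m-k) := by
      intro k _
      rw [show m + 1 - 1 - k = m - k by omega]; ring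
    rw [Finset.sum_congr rfl split, Finset.sum_sub_distrib, P4'']
    have second : ∑ k ∈ Finset.range (m+1), (-1:F)^k * q^(k+1) * eqF (m-k)
        = (m:F) * ((-1:F)^(m+1) * q^m * (1-q)) + (-1:F)^m * q^(m+1) := by
      rw [Finset.sum_range_succ]
      have hm : ∀ k ∈ Finset.range m, (-1:F)^k * q^(k+1) * eqF (m-k)
          = (-1:F)^(m+1) * q^m * (1-q) := by
        intro k hk
        simp only [Finset.mem_range] at hk
        obtain ⟨j, hj⟩ : ∃ j, m - k = j + 1 := ⟨m - k - 1, by omega⟩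
        obtain rfl : m = k + 1 + j := by omega
        rw [hj, show eqF (j+1) = (1-q) * (-q)^j from rfl, neg_pow q j]
        ring
      rw [Finset.sum_congr rfl hm, Finset.sum_const, Finset.card_range,
        nsmul_eq_mul, Nat.sub_self, show eqF 0 = 1 from rfl]
      ring
    rw [second, show eqF (m+1) = (1-q) * (-q)^m from rfl, neg_pow q m]
    push_cast
    ring

lemma cast_succ_ne (m : ℕ) : ((m:F)+1) ≠ 0 := by
  have : ((m+1 : ℕ):F) ≠ 0 := Nat.cast_ne_zero.mpr (Nat.succ_ne_zero m)
  push_cast at this; exact this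

lemma hN_succ (m : ℕ) :
    ((m:F)+1) • hN (m+1) = ∑ k ∈ Finset.range (m + 1), pp (k + 1) * hN (m - k) := by
  rw [hN, smul_smul, mul_inv_cancel₀ (cast_succ_ne m), one_smul]

lemma eN_succ (m : ℕ) :
    ((m:F)+1) • eN (m+1) = ∑ k ∈ Finset.range (m + 1), ((-1:F)^k) • (pp (k + 1) * eN (m - k)) := by
  rw [eN, smul_smul, mul_inv_cancel₀ (cast_succ_ne m), one_smul]

lemma mulh (k : ℕ) : (k:F) • hN k = ∑ j ∈ Finset.range k, pp (j+1) * hN (k-1-j) := by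
  cases k with
  | zero => simp
  | succ m =>
      rw [show ((m+1:ℕ):F) = (m:F)+1 by push_cast; ring, hN_succ]
      exact Finset.sum_congr rfl fun j _ => by rw [show m+1-1-j = m-j by omega]

lemma mule (k : ℕ) : (k:F) • eN k = ∑ j ∈ Finset.range k, ((-1:F)^j) • (pp (j+1) * eN (k-1-j)) := by
  cases k with
  | zero => simp
  | succ m =>
      rw [show ((m+1:ℕ):F) = (m:F)+1 by push_cast; ring, eN_succ]
      exact Finset.sum_congr rfl fun j _ => by rw [show m+1-1-j = m-j by omega]

lemma he (n : ℕ) (hn : 1 ≤ n) :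
    ∑ k ∈ Finset.range (n+1), ((-1:F)^k) • (hN k * eN (n-k)) = 0 := by
  have hn0 : (n:F) ≠ 0 := Nat.cast_ne_zero.mpr (by omega)
  suffices h : (n:F) • (∑ k ∈ Finset.range (n+1), ((-1:F)^k) • (hN k * eN (n-k))) = 0 by
    rcases smul_eq_zero.mp h with h' | h'
    · exact absurd h' hn0
    · exact h'
  rw [Finset.smul_sum]
  have step : ∀ k ∈ Finset.range (n+1),
      (n:F) • (((-1:F)^k) • (hN k * eN (n-k)))
      = ((-1:F)^k) • (((k:F) • hN k) * eN (n-k))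
        + ((-1:F)^k) • (hN k * (((n-k:ℕ):F) • eN (n-k))) := by
    intro k hk
    simp only [Finset.mem_range] at hk
    have hc : (n:F) = (k:F) + ((n-k:ℕ):F) := by
      rw [Nat.cast_sub (by omega)]; ring
    rw [smul_comm, hc, add_smul, smul_add, smul_mul_assoc, mul_smul_comm]
  rw [Finset.sum_congr rfl step, Finset.sum_add_distrib]
  have s1 : ∑ k ∈ Finset.range (n+1), ((-1:F)^k) • (((k:F) • hN k) * eN (n-k))
      = ∑ x ∈ (Finset.range (n+1)).sigma (fun k => Finset.range k),
          ((-1:F)^x.1) • (pp (x.2+1) * hN (x.1-1-x.2) * eN (n-x.1)) := by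
    rw [Finset.sum_sigma]
    refine Finset.sum_congr rfl fun k _ => ?_
    rw [mulh, Finset.sum_mul, Finset.smul_sum]
  have s2 : ∑ k ∈ Finset.range (n+1), ((-1:F)^k) • (hN k * (((n-k:ℕ):F) • eN (n-k)))
      = ∑ x ∈ (Finset.range (n+1)).sigma (fun k => Finset.range (n-k)),
          (((-1:F)^x.1 * (-1:F)^x.2)) • (hN x.1 * (pp (x.2+1) * eN (n-x.1-1-x.2))) := by
    rw [Finset.sum_sigma]
    refine Finset.sum_congr rfl fun k _ => ?_
    rw [mule, Finset.mul_sum, Finset.smul_sum]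
    refine Finset.sum_congr rfl fun j _ => ?_
    rw [mul_smul_comm, smul_smul]
  have s12 : ∑ x ∈ (Finset.range (n+1)).sigma (fun k => Finset.range k),
          ((-1:F)^x.1) • (pp (x.2+1) * hN (x.1-1-x.2) * eN (n-x.1))
      = ∑ x ∈ (Finset.range (n+1)).sigma (fun k => Finset.range (n-k)),
          -((((-1:F)^x.1 * (-1:F)^x.2)) • (hN x.1 * (pp (x.2+1) * eN (n-x.1-1-x.2)))) := by
    refine Finset.sum_nbij' (fun x : (_ : ℕ) × ℕ => (⟨x.1-1-x.2, x.2⟩ : (_ : ℕ) × ℕ))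
      (fun x : (_ : ℕ) × ℕ => (⟨x.1+1+x.2, x.2⟩ : (_ : ℕ) × ℕ)) ?_ ?_ ?_ ?_ ?_
    · intro x hx
      simp only [Finset.mem_sigma, Finset.mem_range] at hx ⊢; omega
    · intro x hx
      simp only [Finset.mem_sigma, Finset.mem_range] at hx ⊢; omega
    · intro x hx
      simp only [Finset.mem_sigma, Finset.mem_range] at hx
      dsimp only
      exact Sigma.ext (show x.1-1-x.2+1+x.2 = x.1 by omega) (by simp)
    · intro x hx
      dsimp only
      exact Sigma.ext (show x.1+1+x.2-1-x.2 = x.1 by omega) (by simp)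
    · intro x hx
      simp only [Finset.mem_sigma, Finset.mem_range] at hx
      show ((-1:F)^x.1) • (pp (x.2+1) * hN (x.1-1-x.2) * eN (n-x.1))
        = -((((-1:F)^(x.1-1-x.2) * (-1:F)^x.2)) • (hN (x.1-1-x.2) * (pp (x.2+1) * eN (n-(x.1-1-x.2)-1-x.2))))
      rw [show n-(x.1-1-x.2)-1-x.2 = n-x.1 by omega, ← neg_smul]
      congr 1
      · rw [show x.1-1-x.2 = x.1-(x.2+1) by omega, neg_one_pow_sub (by omega : x.2+1 ≤ x.1)]
        have h3 : ((-1:F)^(x.2+1) * (-1:F)^x.2) = -1 := by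
          rw [pow_succ]
          calc (-1:F)^x.2 * (-1) * (-1:F)^x.2 = ((-1:F)^x.2 * (-1:F)^x.2) * (-1) := by ring
          _ = -1 := by rw [neg_one_sq', one_mul]
        rw [mul_assoc, h3]
        ring
      · ring
  rw [s1, s2, s12, ← Finset.sum_add_distrib]
  simp

lemma he' (n : ℕ) :
    eN (n+1) = ∑ s ∈ Finset.range (n+1), ((-1:F)^s) • (hN (s+1) * eN (n-s)) := by
  have h := he (n+1) (by omega)
  rw [Finset.sum_range_succ'] at h
  have h0 : ((-1:F)^0) • (hN 0 * eN (n+1-0)) = eN (n+1) := by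
    simp [hN]
  rw [h0] at h
  have h1 : ∀ i ∈ Finset.range (n+1), ((-1:F)^(i+1)) • (hN (i+1) * eN (n+1-(i+1)))
      = -(((-1:F)^i) • (hN (i+1) * eN (n-i))) := by
    intro i _
    rw [show n+1-(i+1) = n-i by omega, pow_succ, ← neg_smul]
    ring_nf
  rw [Finset.sum_congr rfl h1, Finset.sum_neg_distrib] at h
  linear_combination h

lemma Tq_pp (k : ℕ) : Tq (pp (k+1)) =
    Polynomial.C (pp (k+1)) + Polynomial.C (MvPolynomial.C (1-q^(k+1))) * Polynomial.X^(k+1) := by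
  show Tq (MvPolynomial.X k) = _
  rw [show Tq = MvPolynomial.aeval _ from rfl, MvPolynomial.aeval_X]
  rfl

lemma key_term (k n t : ℕ) (hk : k ≤ n) :
    (((Polynomial.C (pp (k+1)) + Polynomial.C (MvPolynomial.C (1-q^(k+1))) * Polynomial.X^(k+1)) *
      ∑ j ∈ Finset.range (n-k+1), Polynomial.monomial j (eqF j • eN (n-k-j))).coeff t)
    = (if t ≤ n-k then pp (k+1) * (eqF t • eN (n-k-t)) else 0)
      + (if k+1 ≤ t ∧ t ≤ n+1 then MvPolynomial.C (1-q^(k+1)) * (eqF (t-k-1) • eN (n+1-t)) else 0) := by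
  rw [add_mul, Polynomial.coeff_add]
  congr 1
  · rw [Finset.mul_sum]
    simp only [Polynomial.C_mul_monomial]
    rw [Polynomial.finset_sum_coeff]
    simp only [Polynomial.coeff_monomial]
    rw [Finset.sum_ite_eq' (Finset.range (n-k+1)) t]
    simp only [Finset.mem_range, Nat.lt_succ_iff]
  · simp only [Finset.mul_sum, Polynomial.X_pow_eq_monomial, Polynomial.monomial_mul_monomial,
      one_mul, mul_one, Polynomial.C_mul_monomial]
    rw [Polynomial.finset_sum_coeff]
    simp only [Polynomial.coeff_monomial]
    by_cases hc : k+1 ≤ t ∧ t ≤ n+1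
    · rw [if_pos hc, Finset.sum_eq_single (t-k-1)]
      · rw [if_pos (by omega), show n-k-(t-k-1) = n+1-t by omega]
      · intro b _ hb
        rw [if_neg (by omega)]
      · intro hb
        exact absurd (Finset.mem_range.mpr (by omega)) hb
    · rw [if_neg hc]
      apply Finset.sum_eq_zero
      intro j hj
      simp only [Finset.mem_range, Nat.lt_succ_iff] at hj
      rw [if_neg (by omega)]

set_option maxHeartbeats 1000000 in
lemma Tq_eN (m : ℕ) :
    Tq (eN m) = ∑ k ∈ Finset.range (m+1), Polynomial.monomial k (eqF k • eN (m-k)) := by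
  induction m using Nat.strong_induction_on with
  | _ m ih =>
    rcases m with _ | n
    · rw [show eN 0 = 1 from by rw [eN]]
      rw [map_one]
      rw [Finset.sum_range_one]
      rw [show eN (0-0) = 1 from by rw [eN], show eqF 0 = 1 from rfl, one_smul,
        Polynomial.monomial_zero_left, map_one]
    · rw [eN, map_smul, map_sum]
      have hterm : ∀ k ∈ Finset.range (n+1),
          Tq ((-1:F)^k • (pp (k+1) * eN (n-k)))
          = (-1:F)^k • ((Polynomial.C (pp (k+1)) + Polynomial.C (MvPolynomial.C (1-q^(k+1))) * Polynomial.X^(k+1)) *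
              ∑ j ∈ Finset.range (n-k+1), Polynomial.monomial j (eqF j • eN (n-k-j))) := by
        intro k hk
        rw [map_smul, map_mul, Tq_pp, ih (n-k) (by omega)]
      rw [Finset.sum_congr rfl hterm]
      refine Polynomial.ext fun t => ?_
      rw [Polynomial.coeff_smul, Polynomial.finset_sum_coeff]
      simp only [Polynomial.coeff_smul]
      have h2 : ∀ k ∈ Finset.range (n+1),
          (-1:F)^k • ((Polynomial.C (pp (k+1)) + Polynomial.C (MvPolynomial.C (1-q^(k+1))) * Polynomial.X^(k+1)) *
              ∑ j ∈ Finset.range (n-k+1), Polynomial.monomial j (eqF j • eN (n-k-j))).coeff t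
          = (-1:F)^k • (if t ≤ n-k then pp (k+1) * (eqF t • eN (n-k-t)) else 0)
            + (-1:F)^k • (if k+1 ≤ t ∧ t ≤ n+1 then MvPolynomial.C (1-q^(k+1)) * (eqF (t-k-1) • eN (n+1-t)) else 0) := by
        intro k hk
        simp only [Finset.mem_range] at hk
        rw [key_term k n t (by omega), smul_add]
      rw [Finset.sum_congr rfl h2, Finset.sum_add_distrib]
      have hR : (∑ r ∈ Finset.range (n+1+1), Polynomial.monomial r (eqF r • eN (n+1-r))).coeff t
          = if t ≤ n+1 then eqF t • eN (n+1-t) else 0 := by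
        rw [Polynomial.finset_sum_coeff]
        simp only [Polynomial.coeff_monomial]
        rw [Finset.sum_ite_eq' (Finset.range (n+1+1)) t]
        simp only [Finset.mem_range, Nat.lt_succ_iff]
      rw [hR]
      by_cases ht : t ≤ n+1
      · rw [if_pos ht]
        have hSB : (∑ k ∈ Finset.range (n+1), (-1:F)^k •
            (if k+1 ≤ t ∧ t ≤ n+1 then MvPolynomial.C (1-q^(k+1)) * (eqF (t-k-1) • eN (n+1-t)) else 0))
            = ((t:F) * eqF t) • eN (n+1-t) := by
          have hsub : Finset.range t ⊆ Finset.range (n+1) := Finset.range_subset_range.mpr (by omega)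
          have hv : ∀ x ∈ Finset.range (n+1), x ∉ Finset.range t → ((-1:F)^x •
              (if x+1 ≤ t ∧ t ≤ n+1 then MvPolynomial.C (1-q^(x+1)) * (eqF (t-x-1) • eN (n+1-t)) else 0)) = 0 := by
            intro x _ hx
            simp only [Finset.mem_range] at hx
            rw [if_neg (by omega), smul_zero]
          rw [← Finset.sum_subset hsub hv]
          have hin : ∀ k ∈ Finset.range t, (-1:F)^k •
              (if k+1 ≤ t ∧ t ≤ n+1 then MvPolynomial.C (1-q^(k+1)) * (eqF (t-k-1) • eN (n+1-t)) else 0)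
              = ((-1:F)^k * (1-q^(k+1)) * eqF (t-1-k)) • eN (n+1-t) := by
            intro k hk
            simp only [Finset.mem_range] at hk
            rw [if_pos ⟨by omega, ht⟩, show t-k-1 = t-1-k by omega,
              ← MvPolynomial.smul_eq_C_mul, smul_smul, smul_smul, mul_assoc]
          rw [Finset.sum_congr rfl hin, ← Finset.sum_smul, P4 t]
        rw [hSB]
        by_cases htn : t ≤ n
        · have hSA : (∑ k ∈ Finset.range (n+1), (-1:F)^k •
              (if t ≤ n-k then pp (k+1) * (eqF t • eN (n-k-t)) else 0))
              = eqF t • ((((n-t:ℕ):F) + 1) • eN (n-t+1)) := by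
            have hsub : Finset.range (n-t+1) ⊆ Finset.range (n+1) := Finset.range_subset_range.mpr (by omega)
            have hv : ∀ x ∈ Finset.range (n+1), x ∉ Finset.range (n-t+1) → ((-1:F)^x •
                (if t ≤ n-x then pp (x+1) * (eqF t • eN (n-x-t)) else 0)) = 0 := by
              intro x hx1 hx
              simp only [Finset.mem_range] at hx1
              simp only [Finset.mem_range] at hx
              rw [if_neg (by omega), smul_zero]
            rw [← Finset.sum_subset hsub hv]
            have hin : ∀ k ∈ Finset.range (n-t+1), (-1:F)^k •
                (if t ≤ n-k then pp (k+1) * (eqF t • eN (n-k-t)) else 0)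
                = eqF t • ((-1:F)^k • (pp (k+1) * eN (n-t-k))) := by
              intro k hk
              simp only [Finset.mem_range] at hk
              rw [if_pos (by omega), show n-k-t = n-t-k by omega, mul_smul_comm, smul_comm]
            rw [Finset.sum_congr rfl hin, ← Finset.smul_sum, eN_succ (n-t)]
          rw [hSA, show n-t+1 = n+1-t by omega, smul_smul, ← add_smul, smul_smul]
          have hsc : ((n:F)+1)⁻¹ * (eqF t * (((n-t:ℕ):F) + 1) + (t:F) * eqF t) = eqF t := by
            rw [Nat.cast_sub htn,
              show eqF t * (((n:F) - (t:F)) + 1) + (t:F) * eqF t = eqF t * ((n:F)+1) by ring,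
              mul_comm (eqF t), ← mul_assoc, inv_mul_cancel₀ (cast_succ_ne n), one_mul]
          rw [hsc]
        · have ht' : t = n+1 := by omega
          have hSA : (∑ k ∈ Finset.range (n+1), (-1:F)^k •
              (if t ≤ n-k then pp (k+1) * (eqF t • eN (n-k-t)) else 0)) = 0 := by
            apply Finset.sum_eq_zero
            intro k hk
            simp only [Finset.mem_range] at hk
            rw [if_neg (by omega), smul_zero]
          rw [hSA, zero_add, smul_smul]
          have hsc : ((n:F)+1)⁻¹ * ((t:F) * eqF t) = eqF t := by
            rw [ht']
            push_cast
            rw [← mul_assoc, inv_mul_cancel₀ (cast_succ_ne n), one_mul]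
          rw [hsc]
      · rw [if_neg ht]
        have hSA : (∑ k ∈ Finset.range (n+1), (-1:F)^k •
            (if t ≤ n-k then pp (k+1) * (eqF t • eN (n-k-t)) else 0)) = 0 :=
          Finset.sum_eq_zero fun k hk => by
            simp only [Finset.mem_range] at hk
            rw [if_neg (by omega), smul_zero]
        have hSB : (∑ k ∈ Finset.range (n+1), (-1:F)^k •
            (if k+1 ≤ t ∧ t ≤ n+1 then MvPolynomial.C (1-q^(k+1)) * (eqF (t-k-1) • eN (n+1-t)) else 0)) = 0 :=
          Finset.sum_eq_zero fun k hk => by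
            rw [if_neg (by omega), smul_zero]
        rw [hSA, hSB, add_zero, smul_zero]

lemma natDegree_Tq_eN (m : ℕ) : (Tq (eN m)).natDegree ≤ m := by
  rw [Tq_eN]
  refine Polynomial.natDegree_sum_le_of_forall_le _ _ fun k hk => ?_
  simp only [Finset.mem_range, Nat.lt_succ_iff] at hk
  exact le_trans (Polynomial.natDegree_monomial_le _) hk

lemma Dq_eN (r m : ℕ) : Dq r (eN m) = if r ≤ m then eqF r • eN (m-r) else 0 := by
  show (Tq (eN m)).coeff r = _
  rw [Tq_eN, Polynomial.finset_sum_coeff]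
  simp only [Polynomial.coeff_monomial]
  rw [Finset.sum_ite_eq' (Finset.range (m+1)) r]
  simp only [Finset.mem_range, Nat.lt_succ_iff]

lemma hh_nat (k : ℕ) : hh (k:ℤ) = hN k := by simp [hh]

lemma cop_ext (m : ℤ) (P : SymF) (N : ℕ) (h : (Tq P).natDegree ≤ N) :
    Cop m P = ((-q⁻¹ : F) ^ (m-1)) • ∑ r ∈ Finset.range (N+1), ((q⁻¹ : F) ^ r) • (hh (m+r) * Dq r P) := by
  unfold Cop
  congr 1
  apply Finset.sum_subset (Finset.range_subset_range.mpr (by omega))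
  intro x _ hx
  simp only [Finset.mem_range, Nat.lt_succ_iff, not_le] at hx
  have : Dq x P = 0 := Polynomial.coeff_eq_zero_of_natDegree_lt (by omega)
  rw [this, mul_zero, smul_zero]

lemma cop_add (m : ℤ) (P Q : SymF) : Cop m (P+Q) = Cop m P + Cop m Q := by
  set N := max (Tq P).natDegree (Tq Q).natDegree with hN'
  have hP : (Tq P).natDegree ≤ N := le_max_left _ _
  have hQ : (Tq Q).natDegree ≤ N := le_max_right _ _
  have hPQ : (Tq (P+Q)).natDegree ≤ N := by
    rw [map_add]
    exact le_trans (Polynomial.natDegree_add_le _ _) (by omega)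
  rw [cop_ext m P N hP, cop_ext m Q N hQ, cop_ext m (P+Q) N hPQ, ← smul_add,
    ← Finset.sum_add_distrib]
  congr 1
  refine Finset.sum_congr rfl fun r _ => ?_
  have : Dq r (P+Q) = Dq r P + Dq r Q := by
    show (Tq (P+Q)).coeff r = _
    rw [map_add, Polynomial.coeff_add]
    rfl
  rw [this, mul_add, smul_add]

lemma cop_zero (m : ℤ) : Cop m 0 = 0 := by
  unfold Cop
  have : ∀ r, Dq r (0 : SymF) = 0 := fun r => by
    show (Tq 0).coeff r = 0
    rw [map_zero, Polynomial.coeff_zero]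
  refine smul_eq_zero_of_right _ (Finset.sum_eq_zero fun r _ => ?_)
  rw [this r, mul_zero, smul_zero]

lemma cop_sum {ι : Type*} (m : ℤ) (s : Finset ι) (f : ι → SymF) :
    Cop m (∑ i ∈ s, f i) = ∑ i ∈ s, Cop m (f i) :=
  map_sum (AddMonoidHom.mk' (Cop m) (cop_add m)) f s

lemma cop_eN (a p : ℕ) :
    Cop ((a+1 : ℕ) : ℤ) (eN p)
    = ∑ r ∈ Finset.range (p+1), ((-1:F)^a * (q⁻¹:F)^(a+r) * eqF r) • (hN (a+1+r) * eN (p-r)) := by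
  rw [cop_ext _ _ p (natDegree_Tq_eN p)]
  rw [show ((a+1:ℕ):ℤ) - 1 = ((a:ℕ):ℤ) by push_cast; ring, zpow_natCast]
  rw [Finset.smul_sum]
  refine Finset.sum_congr rfl fun r hr => ?_
  simp only [Finset.mem_range, Nat.lt_succ_iff] at hr
  rw [show ((a+1:ℕ):ℤ) + (r:ℕ) = ((a+1+r : ℕ):ℤ) by push_cast; ring, hh_nat,
    Dq_eN, if_pos hr, mul_smul_comm, smul_smul, smul_smul]
  congr 1
  rw [neg_pow, pow_add]
  ring

lemma key (n : ℕ) : ∑ a ∈ Finset.range (n+1), Cop ((a+1:ℕ):ℤ) (eN (n-a)) = eN (n+1) := by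
  have h1 : ∑ a ∈ Finset.range (n+1), Cop ((a+1:ℕ):ℤ) (eN (n-a))
      = ∑ x ∈ (Finset.range (n+1)).sigma (fun a => Finset.range (n-a+1)),
          ((-1:F)^x.1 * (q⁻¹:F)^(x.1+x.2) * eqF x.2) • (hN (x.1+1+x.2) * eN (n-x.1-x.2)) := by
    rw [Finset.sum_sigma]
    exact Finset.sum_congr rfl fun a _ => cop_eN a (n-a)
  rw [h1]
  have h2 : ∑ x ∈ (Finset.range (n+1)).sigma (fun a => Finset.range (n-a+1)),
          ((-1:F)^x.1 * (q⁻¹:F)^(x.1+x.2) * eqF x.2) • (hN (x.1+1+x.2) * eN (n-x.1-x.2))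
      = ∑ x ∈ (Finset.range (n+1)).sigma (fun s => Finset.range (s+1)),
          ((-1:F)^(x.1-x.2) * (q⁻¹:F)^x.1 * eqF x.2) • (hN (x.1+1) * eN (n-x.1)) := by
    refine Finset.sum_nbij' (fun x : (_ : ℕ) × ℕ => (⟨x.1+x.2, x.2⟩ : (_ : ℕ) × ℕ))
      (fun x : (_ : ℕ) × ℕ => (⟨x.1-x.2, x.2⟩ : (_ : ℕ) × ℕ)) ?_ ?_ ?_ ?_ ?_
    · intro x hx
      simp only [Finset.mem_sigma, Finset.mem_range] at hx ⊢
      omega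
    · intro x hx
      simp only [Finset.mem_sigma, Finset.mem_range] at hx ⊢
      omega
    · intro x hx
      dsimp only
      exact Sigma.ext (show x.1+x.2-x.2 = x.1 by omega) (by simp)
    · intro x hx
      simp only [Finset.mem_sigma, Finset.mem_range] at hx
      dsimp only
      exact Sigma.ext (show x.1-x.2+x.2 = x.1 by omega) (by simp)
    · intro x hx
      simp only [Finset.mem_sigma, Finset.mem_range] at hx
      dsimp only
      rw [show x.1+x.2-x.2 = x.1 by omega, show x.1+x.2+1 = x.1+1+x.2 by omega,
        show n-(x.1+x.2) = n-x.1-x.2 by omega]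
  rw [h2, Finset.sum_sigma]
  have h3 : ∀ s ∈ Finset.range (n+1),
      (∑ r ∈ Finset.range (s+1), ((-1:F)^(s-r) * (q⁻¹:F)^s * eqF r) • (hN (s+1) * eN (n-s)))
      = ((-1:F)^s) • (hN (s+1) * eN (n-s)) := by
    intro s _
    rw [← Finset.sum_smul]
    congr 1
    have hs : ∑ r ∈ Finset.range (s+1), (-1:F)^(s-r) * (q⁻¹:F)^s * eqF r
        = (q⁻¹:F)^s * ∑ r ∈ Finset.range (s+1), (-1:F)^(s-r) * eqF r := by
      rw [Finset.mul_sum]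
      exact Finset.sum_congr rfl fun r _ => by ring
    rw [hs]
    have hrefl : ∑ r ∈ Finset.range (s+1), (-1:F)^(s-r) * eqF r
        = ∑ k ∈ Finset.range (s+1), (-1:F)^k * eqF (s-k) := by
      rw [← Finset.sum_range_reflect (fun j => (-1:F)^j * eqF (s-j)) (s+1)]
      refine Finset.sum_congr rfl fun r hr => ?_
      simp only [Finset.mem_range, Nat.lt_succ_iff] at hr
      rw [show s+1-1-r = s-r by omega, show s-(s-r) = r by omega]
    rw [hrefl, P4'', ← mul_assoc, mul_comm ((q⁻¹:F)^s), mul_assoc, inv_pow,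
      inv_mul_cancel₀ (pow_ne_zero s q_ne), mul_one]
  rw [Finset.sum_congr rfl h3, ← he']

lemma comp_ext {n : ℕ} {a b : Composition n} (h : a.blocks = b.blocks) : a = b := by
  cases a; cases b; simpa using h

lemma ee_nat (k : ℕ) : ee (k:ℤ) = eN k := by simp [ee]

lemma comp_facts {m : ℕ} (α : Composition (m+1)) :
    α.blocks = α.blocks.headI :: α.blocks.tail ∧ 1 ≤ α.blocks.headI ∧
      α.blocks.headI + α.blocks.tail.sum = m+1 := by
  cases hb : α.blocks with
  | nil =>
      exfalso
      have := α.blocks_sum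
      rw [hb] at this
      simp at this
  | cons a l =>
      have hsum := α.blocks_sum
      rw [hb] at hsum
      simp only [List.sum_cons] at hsum
      have hpos : 0 < a := α.blocks_pos (by rw [hb]; exact List.mem_cons_self)
      exact ⟨by simp, by simpa using Nat.succ_le_of_lt hpos, by simpa using hsum⟩

theorem stmt17' (n : ℕ) :
    ee n = ∑ α : Composition n, Cfun α.blocks := by
  induction n using Nat.strong_induction_on with
  | _ n ih =>
    rcases n with _ | m
    · rw [ee_nat 0]
      have hu : ∀ α : Composition 0, α.blocks = [] := fun α => by
        cases hb : α.blocks with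
        | nil => rfl
        | cons a l =>
            exfalso
            have hs := α.blocks_sum
            rw [hb] at hs
            simp only [List.sum_cons] at hs
            have := α.blocks_pos (show a ∈ α.blocks by rw [hb]; exact List.mem_cons_self)
            omega
      rw [Finset.sum_congr rfl (fun α _ => by rw [hu α]), Finset.sum_const, Finset.card_univ]
      have hcard : Fintype.card (Composition 0) = 1 :=
        Fintype.card_eq_one_iff.mpr
          ⟨⟨[], by simp, by simp⟩, fun β => comp_ext (by rw [hu β])⟩
      rw [hcard, one_smul, show eN 0 = 1 from by rw [eN]]
      rfl
    · rw [ee_nat, ← key m]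
      have hbij : ∑ α : Composition (m+1), Cfun α.blocks
          = ∑ x ∈ (Finset.range (m+1)).sigma (fun a => (Finset.univ : Finset (Composition (m-a)))),
              Cfun ((x.1+1) :: x.2.blocks) := by
        refine Finset.sum_bij'
          (fun (α : Composition (m+1)) _ =>
            (⟨α.blocks.headI - 1,
              ⟨α.blocks.tail,
               fun hi => α.blocks_pos (List.mem_of_mem_tail hi),
               by
                 obtain ⟨h1, h2, h3⟩ := comp_facts α
                 omega⟩⟩ : (a : ℕ) × Composition (m - a)))
          (fun x hx =>
            ⟨(x.1+1) :: x.2.blocks,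
             fun hi => by
               rcases List.mem_cons.mp hi with h | h
               · omega
               · exact x.2.blocks_pos h,
             by
               have hx1 : x.1 < m+1 := by
                 have := (Finset.mem_sigma.mp hx).1
                 simpa using this
               have := x.2.blocks_sum
               simp only [List.sum_cons]
               omega⟩)
          ?_ ?_ ?_ ?_ ?_
        · intro α _
          simp only [Finset.mem_sigma, Finset.mem_range, Finset.mem_univ, and_true]
          obtain ⟨h1, h2, h3⟩ := comp_facts α
          omega
        · intro x hx
          exact Finset.mem_univ _
        · intro α hα
          apply comp_ext
          obtain ⟨h1, h2, h3⟩ := comp_facts α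
          show (α.blocks.headI - 1 + 1) :: α.blocks.tail = α.blocks
          rw [show α.blocks.headI - 1 + 1 = α.blocks.headI by omega, ← h1]
        · intro x hx
          dsimp only
          refine Sigma.ext (by simp) (heq_of_eq (comp_ext ?_))
          simp
        · intro α hα
          obtain ⟨h1, h2, h3⟩ := comp_facts α
          show Cfun α.blocks = Cfun ((α.blocks.headI - 1 + 1) :: α.blocks.tail)
          rw [show α.blocks.headI - 1 + 1 = α.blocks.headI by omega, ← h1]
      rw [hbij, Finset.sum_sigma]
      refine Finset.sum_congr rfl fun a ha => ?_
      simp only [Finset.mem_range] at ha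
      have hstep : ∀ β : Composition (m-a), Cfun ((a+1) :: β.blocks) = Cop ((a+1:ℕ):ℤ) (Cfun β.blocks) :=
        fun β => rfl
      rw [Finset.sum_congr rfl (fun β _ => hstep β), ← cop_sum, ← ih (m-a) (by omega), ee_nat]

/-- `e_n = ∑_{α ⊨ n} C_α[X;q]` for every `n ≥ 0`. -/
theorem stmt17 (n : ℕ) :
    ee n = ∑ α : Composition n, Cfun α.blocks := stmt17' n
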